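/- Let K, M be fields and Ψ : H(K) → H(M) a group homomorphism mapping the center of H(K) into the center of H(M), with component functions as above (Ψ(x,0,0) = (f₁(x),g₁(x),i₁(x)), Ψ(0,y,0) = (f₂(y),g₂(y),i₂(y)), Ψ(0,0,z) = (0,0,i(z))). Then f₁(x)g₁(y) = f₁(y)g₁(x) and f₂(x)g₂(y) = f₂(y)g₂(x) for all x,y ∈ K. -/

import Mathlib

/-- The Heisenberg group over a field `K`: upper unitriangular 3×3 matrices,
encoded by their entries `a` in position (1,2), `b` in position (2,3), `c` in position (1,3). -/
@[ext]
structure Heisenberg (K : Type*) [Field K] where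
  a : K
  b : K
  c : K

namespace Heisenberg

variable {K : Type*} [Field K]

/-- The corresponding upper unitriangular matrix. -/
def toMatrix (x : Heisenberg K) : Matrix (Fin 3) (Fin 3) K :=
  !![1, x.a, x.c; 0, 1, x.b; 0, 0, 1]

instance : Mul (Heisenberg K) :=
  ⟨fun x y => ⟨x.a + y.a, x.b + y.b, x.c + y.c + x.a * y.b⟩⟩
instance : One (Heisenberg K) := ⟨⟨0, 0, 0⟩⟩
instance : Inv (Heisenberg K) :=
  ⟨fun x => ⟨-x.a, -x.b, -x.c + x.a * x.b⟩⟩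

@[simp] lemma mul_a (x y : Heisenberg K) : (x * y).a = x.a + y.a := rfl
@[simp] lemma mul_b (x y : Heisenberg K) : (x * y).b = x.b + y.b := rfl
@[simp] lemma mul_c (x y : Heisenberg K) : (x * y).c = x.c + y.c + x.a * y.b := rfl
@[simp] lemma one_a : (1 : Heisenberg K).a = 0 := rfl
@[simp] lemma one_b : (1 : Heisenberg K).b = 0 := rfl
@[simp] lemma one_c : (1 : Heisenberg K).c = 0 := rfl
@[simp] lemma inv_a (x : Heisenberg K) : (x⁻¹).a = -x.a := rfl
@[simp] lemma inv_b (x : Heisenberg K) : (x⁻¹).b = -x.b := rfl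
@[simp] lemma inv_c (x : Heisenberg K) : (x⁻¹).c = -x.c + x.a * x.b := rfl

instance : Group (Heisenberg K) where
  mul_assoc x y z := by ext <;> simp <;> ring
  one_mul x := by ext <;> simp
  mul_one x := by ext <;> simp
  inv_mul_cancel x := by ext <;> simp

lemma toMatrix_mul (x y : Heisenberg K) :
    (x * y).toMatrix = x.toMatrix * y.toMatrix := by
  simp only [toMatrix, Matrix.mul_fin_three]
  norm_num
  refine ⟨⟨?_, ?_⟩, ?_⟩ <;> ring

end Heisenberg

/-- Let `Ψ : H(K) → H(M)` be a group homomorphism mapping the center of `H(K)` into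
the center of `H(M)`, with component functions as in the paper.  Then
`f₁ x * g₁ y = f₁ y * g₁ x` and `f₂ x * g₂ y = f₂ y * g₂ x` for all `x, y ∈ K`. -/
theorem heisenberg_hom_symmetry {K M : Type*} [Field K] [Field M]
    (Ψ : Heisenberg K → Heisenberg M)
    (hmul : ∀ g h : Heisenberg K, Ψ (g * h) = Ψ g * Ψ h)
    (f₁ g₁ i₁ f₂ g₂ i₂ i : K → M)
    (h1 : ∀ x : K, Ψ ⟨x, 0, 0⟩ = (⟨f₁ x, g₁ x, i₁ x⟩ : Heisenberg M))
    (h2 : ∀ y : K, Ψ ⟨0, y, 0⟩ = (⟨f₂ y, g₂ y, i₂ y⟩ : Heisenberg M))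
    (hz : ∀ z : K, Ψ ⟨0, 0, z⟩ = (⟨0, 0, i z⟩ : Heisenberg M)) :
    (∀ x y : K, f₁ x * g₁ y = f₁ y * g₁ x) ∧
    (∀ x y : K, f₂ x * g₂ y = f₂ y * g₂ x) := by
  constructor
  · intro x y
    have h : Ψ (⟨x,0,0⟩ * ⟨y,0,0⟩) = Ψ (⟨y,0,0⟩ * ⟨x,0,0⟩) := by
      congr 1; ext <;> simp [add_comm]
    rw [hmul, hmul, h1, h1] at h
    have := congrArg Heisenberg.c h
    simp at this; linear_combination this
  · intro x y
    have h : Ψ (⟨0,x,0⟩ * ⟨0,y,0⟩) = Ψ (⟨0,y,0⟩ * ⟨0,x,0⟩) := by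
      congr 1; ext <;> simp [add_comm]
    rw [hmul, hmul, h2, h2] at h
    have := congrArg Heisenberg.c h
    simp at this; linear_combination this
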